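/- For any exponents k_0, …, k_n with 0 ≤ k_i ≤ d_i for each i, the word s_n^{k_n} s_{n-1}^{k_{n-1}} ⋯ s_0^{k_0} is a prefix of c_{n+1} (and hence of the characteristic word s_d). -/

import Mathlib

/-- `wpow u k` is the `k`-fold concatenation of the word `u`. -/
def wpow {A : Type*} (u : List A) (k : ℕ) : List A :=
  (List.replicate k u).flatten

/-- The descending product `s_n^{e_n} s_{n-1}^{e_{n-1}} ⋯ s_0^{e_0}`,
where `S (i+1)` encodes the standard word `s_i`. -/
def descProd {A : Type*} (S : ℕ → List A) (e : ℕ → ℕ) : ℕ → List A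
  | 0 => wpow (S 1) (e 0)
  | n + 1 => wpow (S (n + 2)) (e (n + 1)) ++ descProd S e n

section Aux

variable {A : Type*}

theorem wpow_zero (u : List A) : wpow u 0 = [] := rfl

theorem wpow_succ (u : List A) (k : ℕ) : wpow u (k + 1) = u ++ wpow u k := by
  simp [wpow, List.replicate_succ]

theorem wpow_add (u : List A) (a b : ℕ) : wpow u (a + b) = wpow u a ++ wpow u b := by
  induction a with
  | zero => simp [wpow_zero]
  | succ a ih => rw [Nat.succ_add, wpow_succ, wpow_succ, ih, List.append_assoc]

theorem append_wpow (u : List A) (k : ℕ) : u ++ wpow u k = wpow u k ++ u := by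
  induction k with
  | zero => simp [wpow_zero]
  | succ k ih => rw [wpow_succ, List.append_assoc, ← ih, ← List.append_assoc]

theorem pref_append_left (l : List A) {u v : List A} (h : u <+: v) : l ++ u <+: l ++ v := by
  obtain ⟨t, rfl⟩ := h
  exact ⟨t, by simp⟩

theorem dl2 (u v : List A) (h : 2 ≤ v.length) :
    (u ++ v).dropLast.dropLast = u ++ v.dropLast.dropLast := by
  have h1 : v ≠ [] := by intro e; simp [e] at h
  have h2 : v.dropLast ≠ [] := by
    intro e
    have := congrArg List.length e
    simp [List.length_dropLast] at this
    omega
  rw [List.dropLast_append_of_ne_nil h1, List.dropLast_append_of_ne_nil h2]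

variable (d : ℕ → ℕ) (S : ℕ → List (Fin 2))
  (hS0 : S 0 = [1]) (hS1 : S 1 = [0])
  (hrec : ∀ n, S (n + 2) = wpow (S (n + 1)) (d n) ++ S n)

include hS0 hS1 hrec

theorem S_ne_nil : ∀ n, S n ≠ [] := by
  intro n
  induction n using Nat.strong_induction_on with
  | _ n ih =>
    match n with
    | 0 => simp [hS0]
    | 1 => simp [hS1]
    | (m + 2) =>
      rw [hrec m]
      intro e
      exact ih m (by omega) (List.append_eq_nil_iff.mp e).2

theorem two_le_len (m n : ℕ) : 2 ≤ (S m ++ S n).length := by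
  have h1 := S_ne_nil d S hS0 hS1 hrec m
  have h2 := S_ne_nil d S hS0 hS1 hrec n
  rw [List.length_append]
  have := List.length_pos_iff.mpr h1
  have := List.length_pos_iff.mpr h2
  omega

theorem comm_dl : ∀ n,
    (S n ++ S (n + 1)).dropLast.dropLast = (S (n + 1) ++ S n).dropLast.dropLast := by
  intro n
  induction n with
  | zero => rw [hS0, hS1]; rfl
  | succ n ih =>
    rw [hrec n, ← List.append_assoc, append_wpow, List.append_assoc, List.append_assoc,
      dl2 _ _ (two_le_len d S hS0 hS1 hrec _ _), dl2 _ _ (two_le_len d S hS0 hS1 hrec _ _), ih]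

theorem central_step (n : ℕ) :
    (S (n + 2) ++ S (n + 1)).dropLast.dropLast
      = wpow (S (n + 1)) (d n) ++ (S (n + 1) ++ S n).dropLast.dropLast := by
  rw [hrec n, List.append_assoc, dl2 _ _ (two_le_len d S hS0 hS1 hrec _ _),
    comm_dl d S hS0 hS1 hrec]

theorem central_pref_word (n : ℕ) :
    (S (n + 1) ++ S n).dropLast.dropLast
      <+: S (n + 1) ++ (S (n + 1) ++ S n).dropLast.dropLast := by
  have h1 : (S (n + 1) ++ S n).dropLast.dropLast <+: S (n + 1) ++ (S n ++ S (n + 1)) := by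
    refine (List.dropLast_prefix _).trans ((List.dropLast_prefix _).trans ?_)
    rw [← List.append_assoc]
    exact List.prefix_append _ _
  have h2 : S (n + 1) ++ (S (n + 1) ++ S n).dropLast.dropLast
      <+: S (n + 1) ++ (S n ++ S (n + 1)) := by
    refine pref_append_left _ ?_
    rw [← comm_dl d S hS0 hS1 hrec]
    exact (List.dropLast_prefix _).trans (List.dropLast_prefix _)
  refine List.prefix_of_prefix_length_le h1 h2 ?_
  simp

theorem central_pref_wpow (n : ℕ) : ∀ m,
    (S (n + 1) ++ S n).dropLast.dropLast
      <+: wpow (S (n + 1)) m ++ (S (n + 1) ++ S n).dropLast.dropLast := by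
  intro m
  induction m with
  | zero => simp [wpow_zero]
  | succ m ih =>
    rw [wpow_succ, List.append_assoc]
    exact (central_pref_word d S hS0 hS1 hrec n).trans (pref_append_left _ ih)

end Aux

/-- For any exponents `k_i ≤ d_i`, the word `s_n^{k_n} ⋯ s_0^{k_0}` is a prefix of
the central word `c_{n+1}` (the word `s_{n+1} s_n` with its last two letters removed). -/
theorem descProd_prefix_central (d : ℕ → ℕ)
    (hd0 : 1 ≤ d 0) (hd : ∀ n, 1 ≤ n → 1 ≤ d n)
    (S : ℕ → List (Fin 2))
    (hS0 : S 0 = [1]) (hS1 : S 1 = [0])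
    (hrec : ∀ n, S (n + 2) = wpow (S (n + 1)) (d n) ++ S n)
    (n : ℕ) (k : ℕ → ℕ) (hk : ∀ i, i ≤ n → k i ≤ d i) :
    descProd S k n <+: (S (n + 2) ++ S (n + 1)).dropLast.dropLast := by
  induction n with
  | zero =>
    rw [central_step d S hS0 hS1 hrec 0]
    have hc : (S 1 ++ S 0).dropLast.dropLast = [] := by rw [hS0, hS1]; rfl
    rw [hc, List.append_nil]
    have hle := hk 0 le_rfl
    rw [show d 0 = k 0 + (d 0 - k 0) by omega, wpow_add]
    exact List.prefix_append _ _
  | succ n ih =>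
    rw [central_step d S hS0 hS1 hrec (n + 1)]
    have hle := hk (n + 1) le_rfl
    rw [show d (n + 1) = k (n + 1) + (d (n + 1) - k (n + 1)) by omega, wpow_add,
      List.append_assoc]
    show wpow (S (n + 2)) (k (n + 1)) ++ descProd S k n <+: _
    refine pref_append_left _ ?_
    have h1 := ih (fun i hi => hk i (by omega))
    exact h1.trans (central_pref_wpow d S hS0 hS1 hrec (n + 1) _)
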